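/- Let 1 → C → H → Q → 1 be a central extension of groups where C has finite exponent and Q is an infinitely divisible, torsion-free abelian group. Then H = C × L for some infinitely divisible subgroup L of H; moreover C = tor(H) and L is the set of infinitely divisible elements, both fully invariant. -/
import Mathlib


/-- Let `1 → C → H → Q → 1` be a central extension with `C` of finite exponent
`d` and `Q = H/C` an infinitely divisible torsion-free abelian group.  Then
`H = C × L` for an infinitely divisible subgroup `L`; moreover `C = tor(H)`
and `L` is the set of infinitely divisible elements of `H`, and both are fully
invariant.  (The conditions on `Q = H/C` are phrased elementwise in `H`.) -/
theorem stmt16 (H : Type*) [Group H] (C : Subgroup H)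
    (hcentral : C ≤ Subgroup.center H)
    (d : ℕ) (hd : 0 < d) (hexp : ∀ c ∈ C, c ^ d = 1)
    (habelian : ∀ a b : H, a * b * a⁻¹ * b⁻¹ ∈ C)
    (htf : ∀ x : H, ∀ n : ℕ, 0 < n → x ^ n ∈ C → x ∈ C)
    (hdiv : ∀ x : H, ∀ n : ℕ, 0 < n → ∃ y : H, y ^ n * x⁻¹ ∈ C) :
    ∃ L : Subgroup H,
      (∀ x ∈ L, ∀ n : ℕ, 0 < n → ∃ y ∈ L, y ^ n = x) ∧
      C ⊓ L = ⊥ ∧ C ⊔ L = ⊤ ∧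
      (C : Set H) = {x : H | IsOfFinOrder x} ∧
      (L : Set H) = {x : H | ∀ n : ℕ, 0 < n → ∃ y : H, y ^ n = x} ∧
      (∀ f : H →* H, C.map f ≤ C ∧ L.map f ≤ L) := by
  -- Step 1: H is abelian.
  have comm : ∀ a b : H, Commute a b := by
    intro a b
    obtain ⟨w, hw⟩ := hdiv a d hd
    set c : H := w * b * w⁻¹ * b⁻¹ with hcdef
    have hcC : c ∈ C := habelian w b
    have hcx : ∀ x : H, Commute c x := fun x =>
      ((Subgroup.mem_center_iff.mp (hcentral hcC) x).symm : c * x = x * c)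
    have h1 : w * b = c * b * w := by rw [hcdef]; group
    have step : ∀ n : ℕ, w ^ n * b = c ^ n * b * w ^ n := by
      intro n
      induction n with
      | zero => simp
      | succ n ih =>
        have : w ^ (n + 1) * b = w * (w ^ n * b) := by rw [pow_succ']; group
        rw [this, ih]
        have hcw : w * (c ^ n * b * w ^ n) = c ^ n * (w * b) * w ^ n := by
          have := ((hcx w).pow_left n).eq
          calc w * (c ^ n * b * w ^ n) = (w * c ^ n) * b * w ^ n := by group
            _ = (c ^ n * w) * b * w ^ n := by rw [← this]
            _ = c ^ n * (w * b) * w ^ n := by group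
        rw [hcw, h1, pow_succ, pow_succ']
        group
    have hwd : w ^ d * b = b * w ^ d := by
      have := step d
      rwa [hexp c hcC, one_mul] at this
    -- a = (w^d * a⁻¹)⁻¹ * w^d with w^d*a⁻¹ central
    set z : H := w ^ d * a⁻¹ with hzdef
    have hz : ∀ x : H, z * x = x * z := fun x =>
      (Subgroup.mem_center_iff.mp (hcentral hw) x).symm
    have ha : a = z⁻¹ * w ^ d := by rw [hzdef]; group
    show a * b = b * a
    rw [ha]
    have hzb : z⁻¹ * b = b * z⁻¹ := by
      have hzc : Commute z b := hz b
      exact hzc.inv_left.eq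
    calc z⁻¹ * w ^ d * b = z⁻¹ * (w ^ d * b) := by group
      _ = z⁻¹ * (b * w ^ d) := by rw [hwd]
      _ = (z⁻¹ * b) * w ^ d := by group
      _ = b * (z⁻¹ * w ^ d) := by rw [hzb]; group
  have hmp : ∀ (a b : H) (k : ℕ), (a * b) ^ k = a ^ k * b ^ k :=
    fun a b k => (comm a b).mul_pow k
  -- L = set of d-th powers
  refine ⟨{ carrier := Set.range (· ^ d)
            one_mem' := ⟨1, one_pow d⟩
            mul_mem' := ?_
            inv_mem' := ?_ }, ?_, ?_, ?_, ?_, ?_, ?_⟩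
  · rintro a b ⟨x, rfl⟩ ⟨y, rfl⟩
    exact ⟨x * y, (hmp x y d)⟩
  · rintro a ⟨x, rfl⟩
    exact ⟨x⁻¹, inv_pow x d⟩
  · -- divisibility within L
    rintro x ⟨y, rfl⟩ n hn
    obtain ⟨u, hu⟩ := hdiv y (n * d) (Nat.mul_pos hn hd)
    set c : H := u ^ (n * d) * y⁻¹ with hcdef
    have hy : u ^ (n * d) = c * y := by rw [hcdef]; group
    refine ⟨u ^ (d * d), ⟨u ^ d, (pow_mul u d d).symm⟩, ?_⟩
    have : (u ^ (d * d)) ^ n = (u ^ (n * d)) ^ d := by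
      rw [← pow_mul, ← pow_mul]; ring_nf
    rw [this, hy, hmp, hexp c hu, one_mul]
  · -- C ⊓ L = ⊥
    rw [eq_bot_iff]
    rintro x ⟨hxC, y, rfl⟩
    have hyC : y ∈ C := htf y d hd hxC
    simpa [Subgroup.mem_bot] using hexp y hyC
  · -- C ⊔ L = ⊤
    rw [eq_top_iff]
    intro x _
    obtain ⟨y, hy⟩ := hdiv x d hd
    have hx : x = (y ^ d * x⁻¹)⁻¹ * y ^ d := by group
    rw [hx]
    exact mul_mem (Subgroup.mem_sup_left (inv_mem hy))
      (Subgroup.mem_sup_right ⟨y, rfl⟩)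
  · -- C = torsion
    ext c
    constructor
    · intro hc
      exact isOfFinOrder_iff_pow_eq_one.mpr ⟨d, hd, hexp c hc⟩
    · intro hc
      obtain ⟨n, hn, hcn⟩ := isOfFinOrder_iff_pow_eq_one.mp hc
      exact htf c n hn (hcn ▸ C.one_mem)
  · -- L = divisible elements
    ext x
    constructor
    · rintro ⟨y, rfl⟩ n hn
      obtain ⟨u, hu⟩ := hdiv y (n * d) (Nat.mul_pos hn hd)
      set c : H := u ^ (n * d) * y⁻¹ with hcdef
      have hy : u ^ (n * d) = c * y := by rw [hcdef]; group
      refine ⟨u ^ (d * d), ?_⟩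
      have : (u ^ (d * d)) ^ n = (u ^ (n * d)) ^ d := by
        rw [← pow_mul, ← pow_mul]; ring_nf
      rw [this, hy, hmp, hexp c hu, one_mul]
    · intro hx
      obtain ⟨y, hy⟩ := hx d hd
      exact ⟨y, hy⟩
  · -- full invariance
    intro f
    constructor
    · rintro x ⟨c, hc, rfl⟩
      refine htf (f c) d hd ?_
      rw [← map_pow, hexp c hc, map_one]
      exact C.one_mem
    · rintro x ⟨a, ⟨y, rfl⟩, rfl⟩
      exact ⟨f y, (map_pow f y d).symm⟩
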